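/- Assume the homoskedastic Gaussian linear model holds and Êrr is a linearly invariant estimator of prediction error. Let Y' be an independent copy of the response vector generated from the same features X (so Y'_i = X_iᵀθ + ε'_i with ε' an independent copy of ε), and let Êrr_XY and Êrr_XY' denote the estimator computed on (X, Y) and on (X, Y') respectively. Then (Err_XY, Êrr_XY) and (Err_XY, Êrr_XY') have the same joint distribution. -/

import Mathlib

open MeasureTheory ProbabilityTheory Filter
open scoped Matrix BigOperators ENNReal NNReal

noncomputable section

/-- OLS coefficient estimate `θ̂ = (XᵀX)⁻¹XᵀY`. -/
def ols {n p : ℕ} (x : Fin n → Fin p → ℝ) (y : Fin n → ℝ) : Fin p → ℝ :=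
  ((Matrix.of x)ᵀ * Matrix.of x)⁻¹ *ᵥ ((Matrix.of x)ᵀ *ᵥ y)

/-- The homoskedastic Gaussian linear model: `n` training points plus one test point
(index `Fin.last n`), i.i.d. data points `(Xᵢ, Yᵢ)` with `Yᵢ = Xᵢᵀθ + εᵢ`,
`εᵢ` i.i.d. `N(0, σ²)` independent of the features. -/
structure GLM (n p : ℕ) (Ω : Type) [MeasurableSpace Ω] (μ : Measure Ω) where
  /-- true coefficient vector -/
  θ : Fin p → ℝ
  /-- noise variance -/
  σ2 : ℝ≥0
  /-- features of the `n` training points and the test point -/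
  X : Ω → Fin (n + 1) → Fin p → ℝ
  /-- noise of the `n` training points and the test point -/
  ε : Ω → Fin (n + 1) → ℝ
  measX : Measurable X
  measε : Measurable ε
  /-- the noise vector is independent of all the features -/
  indep : IndepFun X ε μ
  /-- the noise variables are i.i.d. `N(0, σ²)` -/
  gauss : Measure.map ε μ = Measure.pi fun _ : Fin (n + 1) => gaussianReal 0 σ2
  /-- the data points are independent -/
  iid : iIndepFun (fun i ω => (X ω i, ε ω i)) μ
  /-- the data points are identically distributed -/
  idd : ∀ i, Measure.map (fun ω => (X ω i, ε ω i)) μ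
      = Measure.map (fun ω => (X ω 0, ε ω 0)) μ

namespace GLM

variable {n p : ℕ} {Ω : Type} [MeasurableSpace Ω] {μ : Measure Ω}

/-- responses `Yᵢ = Xᵢᵀθ + εᵢ` -/
def Y (M : GLM n p Ω μ) (ω : Ω) (i : Fin (n + 1)) : ℝ := M.X ω i ⬝ᵥ M.θ + M.ε ω i

/-- training features -/
def Xtr (M : GLM n p Ω μ) (ω : Ω) : Fin n → Fin p → ℝ := fun i => M.X ω i.castSucc

/-- training responses -/
def Ytr (M : GLM n p Ω μ) (ω : Ω) : Fin n → ℝ := fun i => M.Y ω i.castSucc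

/-- σ-algebra generated by the training data `(X, Y)` -/
def mXY (M : GLM n p Ω μ) : MeasurableSpace Ω :=
  MeasurableSpace.comap (fun ω => (M.Xtr ω, M.Ytr ω)) inferInstance

/-- σ-algebra generated by the training features `X` -/
def mX (M : GLM n p Ω μ) : MeasurableSpace Ω :=
  MeasurableSpace.comap M.Xtr inferInstance

/-- squared-error loss of the OLS fit at the independent test point -/
def testLoss (M : GLM n p Ω μ) (ω : Ω) : ℝ :=
  (M.Y ω (Fin.last n) - M.X ω (Fin.last n) ⬝ᵥ ols (M.Xtr ω) (M.Ytr ω)) ^ 2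

/-- `Err_XY := E[(Y_{n+1} − X_{n+1}ᵀθ̂)² | (X, Y)]`, the out-of-sample prediction
error of the model fit on the training data -/
def errXY (M : GLM n p Ω μ) : Ω → ℝ := μ[M.testLoss | M.mXY]

/-- `Err_X := E[Err_XY | X]` -/
def errX (M : GLM n p Ω μ) : Ω → ℝ := μ[M.errXY | M.mX]

/-- `Err := E[Err_XY]`, the average prediction error -/
def err (M : GLM n p Ω μ) : ℝ := ∫ ω, M.errXY ω ∂μ

end GLM

/-- A linearly invariant estimator of prediction error: a (measurable) function of the
training data `(x, y)` and of an independent randomization variable `u`, whose value is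
unchanged when each `yᵢ` is replaced by `yᵢ + xᵢᵀκ`. -/
structure LinInvEstimator (n p : ℕ) where
  /-- value on data `(x, y)` with randomization `u` -/
  F : (Fin n → Fin p → ℝ) → (Fin n → ℝ) → ℝ → ℝ
  meas : Measurable fun q : ((Fin n → Fin p → ℝ) × (Fin n → ℝ)) × ℝ => F q.1.1 q.1.2 q.2
  invariant : ∀ x y u (κ : Fin p → ℝ), F x (fun i => y i + x i ⬝ᵥ κ) u = F x y u

/-- the estimator, as a random variable, evaluated on the training data of a Gaussian
linear model with randomization `U` -/
def LinInvEstimator.rv {n p : ℕ} {Ω : Type} [MeasurableSpace Ω] {μ : Measure Ω}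
    (E : LinInvEstimator n p) (M : GLM n p Ω μ) (U : Ω → ℝ) : Ω → ℝ :=
  fun ω => E.F (M.Xtr ω) (M.Ytr ω) (U ω)

end
/- ===================== auxiliary material for the proof ===================== -/

section AuxForProof

open MeasureTheory ProbabilityTheory Filter Matrix
open scoped Matrix BigOperators ENNReal NNReal

namespace LinInvAux

instance matrixMeasurableSpace {m n' : Type*} {α : Type*} [MeasurableSpace α] :
    MeasurableSpace (Matrix m n' α) :=
  (inferInstance : MeasurableSpace (m → n' → α))

instance matrixBorelSpace {m n' : Type*} [Countable m] [Countable n'] :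
    BorelSpace (Matrix m n' ℝ) :=
  (inferInstance : BorelSpace (m → n' → ℝ))

/-- product of functions of separate coordinates integrates to product of integrals -/
lemma lintegral_pi_prod {ι : Type*} [Fintype ι] [DecidableEq ι] (μ : ι → Measure ℝ)
    [∀ i, SigmaFinite (μ i)] (g : ι → ℝ → ℝ≥0∞) (hg : ∀ i, Measurable (g i)) :
    ∫⁻ x, ∏ i, g i (x i) ∂Measure.pi μ = ∏ i, ∫⁻ y, g i y ∂μ i := by
  have hmeas : Measurable fun x : ι → ℝ => ∏ i, g i (x i) :=
    Finset.measurable_prod _ fun i _ => (hg i).comp (measurable_pi_apply i)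
  have key : ∀ s : Finset ι, ∀ x : ι → ℝ,
      (∫⋯∫⁻_s, (fun x => ∏ i, g i (x i)) ∂μ) x
        = (∏ i ∈ s, ∫⁻ y, g i y ∂μ i) * ∏ i ∈ sᶜ, g i (x i) := by
    intro s
    induction s using Finset.induction with
    | empty => intro x; simp
    | @insert i s hi ih =>
      intro x
      rw [lmarginal_insert _ hmeas hi]
      simp_rw [ih]
      have hisc : i ∈ sᶜ := Finset.mem_compl.2 hi
      have hsc : sᶜ = insert i ((insert i s)ᶜ) := by
        rw [Finset.compl_insert, Finset.insert_erase hisc]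
      have hnot : i ∉ (insert i s)ᶜ := by
        simp [Finset.mem_compl]
      have h1 : ∀ y : ℝ, ∏ j ∈ sᶜ, g j (Function.update x i y j)
          = g i y * ∏ j ∈ (insert i s)ᶜ, g j (x j) := by
        intro y
        rw [hsc, Finset.prod_insert hnot, Function.update_self]
        congr 1
        refine Finset.prod_congr rfl fun j hj => ?_
        rw [Function.update_of_ne]
        intro hji
        exact (Finset.mem_compl.1 hj) (hji ▸ Finset.mem_insert_self i s)
      simp_rw [h1]
      have h2 : ∀ y : ℝ,
          (∏ i ∈ s, ∫⁻ y, g i y ∂μ i) * (g i y * ∏ j ∈ (insert i s)ᶜ, g j (x j))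
          = ((∏ i ∈ s, ∫⁻ y, g i y ∂μ i) * ∏ j ∈ (insert i s)ᶜ, g j (x j)) * g i y := by
        intro y; ring
      simp_rw [h2]
      rw [lintegral_const_mul _ (hg i), Finset.prod_insert hi]
      ring
  have h0 := key Finset.univ (fun _ => 0)
  rw [lintegral_eq_lmarginal_univ (fun _ => (0:ℝ)), h0]
  simp

lemma pi_gaussian_eq {ι : Type*} [Fintype ι] [DecidableEq ι] {v : ℝ≥0} (hv : v ≠ 0) :
    (Measure.pi fun _ : ι => gaussianReal 0 v)
      = (Measure.pi fun _ : ι => (volume : Measure ℝ)).withDensity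
          (fun x => ∏ i, gaussianPDF 0 v (x i)) := by
  refine Measure.pi_eq fun s hs => ?_
  have hpdf : Measurable (gaussianPDF (0:ℝ) v) :=
    (measurable_gaussianPDFReal 0 v).ennreal_ofReal
  rw [withDensity_apply _ (MeasurableSet.univ_pi hs)]
  have hind : ∀ x : ι → ℝ,
      (Set.pi Set.univ s).indicator (fun x => ∏ i, gaussianPDF 0 v (x i)) x
      = ∏ i, (s i).indicator (gaussianPDF 0 v) (x i) := by
    intro x
    by_cases hx : x ∈ Set.pi Set.univ s
    · rw [Set.indicator_of_mem hx]
      exact Finset.prod_congr rfl fun i _ =>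
        (Set.indicator_of_mem (hx i (Set.mem_univ i)) _).symm
    · rw [Set.indicator_of_notMem hx]
      rw [Set.mem_univ_pi] at hx
      push_neg at hx
      obtain ⟨i, hi⟩ := hx
      exact (Finset.prod_eq_zero (Finset.mem_univ i)
        (by rw [Set.indicator_of_notMem hi])).symm
  calc ∫⁻ x in Set.pi Set.univ s, (fun x => ∏ i, gaussianPDF 0 v (x i)) x
        ∂Measure.pi (fun _ : ι => (volume : Measure ℝ))
      = ∫⁻ x, ∏ i, (s i).indicator (gaussianPDF 0 v) (x i)
        ∂Measure.pi (fun _ : ι => (volume : Measure ℝ)) := by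
        rw [← lintegral_indicator (MeasurableSet.univ_pi hs)]
        exact lintegral_congr hind
    _ = ∏ i, ∫⁻ y, (s i).indicator (gaussianPDF 0 v) y ∂(volume : Measure ℝ) :=
        lintegral_pi_prod _ _ fun i => hpdf.indicator (hs i)
    _ = ∏ i, gaussianReal 0 v (s i) := by
        refine Finset.prod_congr rfl fun i _ => ?_
        rw [lintegral_indicator (hs i), gaussianReal_apply 0 hv]

lemma map_withDensity_equiv {α β : Type*} [MeasurableSpace α] [MeasurableSpace β]
    (e : α ≃ᵐ β) (μ : Measure α) {G : α → ℝ≥0∞} (hG : Measurable G) :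
    Measure.map e (μ.withDensity G) = (Measure.map e μ).withDensity (G ∘ e.symm) := by
  ext s hs
  rw [Measure.map_apply e.measurable hs, withDensity_apply _ (e.measurable hs),
    withDensity_apply _ hs,
    setLIntegral_map hs (hG.comp e.symm.measurable) e.measurable]
  refine setLIntegral_congr_fun (e.measurable hs) (fun x _ => ?_)
  simp

/-- Rotation invariance of the iid centered Gaussian measure. -/
lemma rot_invariant {ι : Type*} [Fintype ι] [DecidableEq ι] {M : Matrix ι ι ℝ}
    (hM : Mᵀ * M = 1) (v : ℝ≥0) :
    Measure.map (fun e => M *ᵥ e) (Measure.pi fun _ : ι => gaussianReal 0 v)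
      = Measure.pi fun _ : ι => gaussianReal 0 v := by
  have hMM : M * Mᵀ = 1 := mul_eq_one_comm.mp hM
  have hmeasM : Measurable fun e : ι → ℝ => M *ᵥ e := by
    refine measurable_pi_lambda _ fun i => ?_
    simpa [Matrix.mulVec, dotProduct] using
      Finset.measurable_sum Finset.univ fun j _ =>
        (show Measurable fun c : ι → ℝ => c j from measurable_pi_apply j).const_mul (M i j)
  have hmeasMT : Measurable fun e : ι → ℝ => Mᵀ *ᵥ e := by
    refine measurable_pi_lambda _ fun i => ?_
    simpa [Matrix.mulVec, dotProduct] using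
      Finset.measurable_sum Finset.univ fun j _ =>
        (show Measurable fun c : ι → ℝ => c j from measurable_pi_apply j).const_mul (Mᵀ i j)
  rcases eq_or_ne v 0 with rfl | hv
  · have hpi : (Measure.pi fun _ : ι => gaussianReal 0 0) = Measure.dirac (0 : ι → ℝ) := by
      simp only [gaussianReal_zero_var]
      refine Measure.pi_eq fun s hs => ?_
      classical
      rw [Measure.dirac_apply' _ (MeasurableSet.univ_pi hs)]
      have hi : ∀ i, (Measure.dirac (0:ℝ)) (s i) = if (0:ℝ) ∈ s i then 1 else 0 := by
        intro i
        rw [Measure.dirac_apply' _ (hs i), Set.indicator_apply]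
        simp
      simp_rw [hi]
      rw [Fintype.prod_boole, Set.indicator_apply]
      simp [Set.mem_univ_pi]
    rw [hpi, Measure.map_dirac' hmeasM, Matrix.mulVec_zero]
  · have hdet2 : M.det * M.det = 1 := by
      have := congrArg Matrix.det hM
      rwa [Matrix.det_mul, Matrix.det_transpose, Matrix.det_one] at this
    have hdet : M.det ≠ 0 := by
      intro h; rw [h, mul_zero] at hdet2; exact zero_ne_one hdet2
    have habs : |M.det| = 1 := by
      rcases mul_self_eq_one_iff.mp hdet2 with h | h <;> simp [h, abs_of_nonneg, abs_of_nonpos]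
    let T : (ι → ℝ) ≃ᵐ (ι → ℝ) :=
      { toFun := fun e => M *ᵥ e
        invFun := fun e => Mᵀ *ᵥ e
        left_inv := fun e => by
          show Mᵀ *ᵥ (M *ᵥ e) = e
          rw [Matrix.mulVec_mulVec, hM, Matrix.one_mulVec]
        right_inv := fun e => by
          show M *ᵥ (Mᵀ *ᵥ e) = e
          rw [Matrix.mulVec_mulVec, hMM, Matrix.one_mulVec]
        measurable_toFun := hmeasM
        measurable_invFun := hmeasMT }
    have hGmeas : Measurable fun x : ι → ℝ => ∏ i, gaussianPDF 0 v (x i) :=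
      Finset.measurable_prod _ fun i _ =>
        ((measurable_gaussianPDFReal 0 v).ennreal_ofReal).comp (measurable_pi_apply i)
    have hvol : Measure.map (fun e : ι → ℝ => M *ᵥ e)
        (Measure.pi fun _ : ι => (volume : Measure ℝ))
        = Measure.pi fun _ : ι => (volume : Measure ℝ) := by
      have := Real.map_matrix_volume_pi_eq_smul_volume_pi hdet
      simp only [MeasureTheory.volume_pi] at this
      have hcoe : (Matrix.toLin' M : (ι → ℝ) → ι → ℝ) = fun e => M *ᵥ e := by
        funext e; exact Matrix.toLin'_apply M e
      rw [hcoe] at this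
      rw [this, abs_inv, habs]
      simp
    have hGinv : (fun x : ι → ℝ => ∏ i, gaussianPDF 0 v (x i)) ∘ (fun e => Mᵀ *ᵥ e)
        = fun x : ι → ℝ => ∏ i, gaussianPDF 0 v (x i) := by
      funext x
      simp only [Function.comp_apply, gaussianPDF]
      rw [← ENNReal.ofReal_prod_of_nonneg (fun i _ => gaussianPDFReal_nonneg 0 v _),
        ← ENNReal.ofReal_prod_of_nonneg (fun i _ => gaussianPDFReal_nonneg 0 v _)]
      congr 1
      simp only [gaussianPDFReal, sub_zero]
      rw [Finset.prod_mul_distrib, Finset.prod_mul_distrib, ← Real.exp_sum, ← Real.exp_sum]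
      congr 2
      have hsq : ∀ y : ι → ℝ, ∑ i, -(y i ^ 2) / (2 * (v:ℝ)) = -(y ⬝ᵥ y) / (2 * (v:ℝ)) := by
        intro y
        have h1 : (y ⬝ᵥ y) = ∑ i, y i ^ 2 := by simp [dotProduct, sq]
        rw [h1, ← Finset.sum_div]
        congr 1
        rw [← Finset.sum_neg_distrib]
      have hdot : (Mᵀ *ᵥ x) ⬝ᵥ (Mᵀ *ᵥ x) = x ⬝ᵥ x := by
        rw [Matrix.dotProduct_mulVec, Matrix.vecMul_transpose, Matrix.mulVec_mulVec, hMM,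
          Matrix.one_mulVec]
      rw [hsq, hsq, hdot]
    calc Measure.map (fun e => M *ᵥ e) (Measure.pi fun _ : ι => gaussianReal 0 v)
        = Measure.map T ((Measure.pi fun _ : ι => (volume : Measure ℝ)).withDensity
            (fun x => ∏ i, gaussianPDF 0 v (x i))) := by rw [pi_gaussian_eq hv]; rfl
      _ = (Measure.map T (Measure.pi fun _ : ι => (volume : Measure ℝ))).withDensity
            ((fun x => ∏ i, gaussianPDF 0 v (x i)) ∘ T.symm) :=
          map_withDensity_equiv T _ hGmeas
      _ = Measure.pi fun _ : ι => gaussianReal 0 v := by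
          have h5 : Measure.map T (Measure.pi fun _ : ι => (volume : Measure ℝ))
              = Measure.pi fun _ : ι => (volume : Measure ℝ) := hvol
          rw [h5]
          have hsymm : (T.symm : (ι → ℝ) → ι → ℝ) = fun e => Mᵀ *ᵥ e := rfl
          rw [hsymm, hGinv, ← pi_gaussian_eq hv]

variable {n p : ℕ}

/-- `A = (XᵀX)⁻¹Xᵀ` -/
noncomputable def Am (x : Fin n → Fin p → ℝ) : Matrix (Fin p) (Fin n) ℝ :=
  ((Matrix.of x)ᵀ * Matrix.of x)⁻¹ * (Matrix.of x)ᵀ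

/-- the hat matrix -/
noncomputable def Hm (x : Fin n → Fin p → ℝ) : Matrix (Fin n) (Fin n) ℝ := Matrix.of x * Am x

/-- the residual projection -/
noncomputable def Qm (x : Fin n → Fin p → ℝ) : Matrix (Fin n) (Fin n) ℝ := 1 - Hm x

lemma ols_eq_Am (x : Fin n → Fin p → ℝ) (y : Fin n → ℝ) : ols x y = Am x *ᵥ y := by
  rw [ols, Am, ← Matrix.mulVec_mulVec]

lemma Am_mul_Hm (x : Fin n → Fin p → ℝ) : Am x * Hm x = Am x := by
  set C := (Matrix.of x)ᵀ * Matrix.of x with hC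
  have key : C⁻¹ * C * C⁻¹ = C⁻¹ := by
    by_cases h : IsUnit C.det
    · rw [Matrix.nonsing_inv_mul _ h, one_mul]
    · rw [Matrix.nonsing_inv_apply_not_isUnit _ h]; simp
  calc Am x * Hm x = (C⁻¹ * C * C⁻¹) * (Matrix.of x)ᵀ := by
        rw [Am, Hm, Am, hC]; simp only [Matrix.mul_assoc]
    _ = Am x := by rw [key, Am]

lemma Hm_mul_Hm (x : Fin n → Fin p → ℝ) : Hm x * Hm x = Hm x := by
  nth_rw 1 [Hm]
  rw [Matrix.mul_assoc, Am_mul_Hm]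
  rfl

lemma Hm_transpose (x : Fin n → Fin p → ℝ) : (Hm x)ᵀ = Hm x := by
  rw [Hm, Am]
  rw [← Matrix.mul_assoc]
  rw [Matrix.transpose_mul, Matrix.transpose_mul, Matrix.transpose_transpose,
    Matrix.transpose_nonsing_inv]
  rw [Matrix.transpose_mul, Matrix.transpose_transpose, Matrix.mul_assoc]

lemma Am_mul_Qm (x : Fin n → Fin p → ℝ) : Am x * Qm x = 0 := by
  rw [Qm, Matrix.mul_sub, Matrix.mul_one, Am_mul_Hm, sub_self]

lemma Qm_mul_Qm (x : Fin n → Fin p → ℝ) : Qm x * Qm x = Qm x := by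
  rw [Qm, Matrix.sub_mul, Matrix.one_mul, Matrix.mul_sub, Matrix.mul_one, Hm_mul_Hm]
  abel

lemma Qm_mul_Hm (x : Fin n → Fin p → ℝ) : Qm x * Hm x = 0 := by
  rw [Qm, Matrix.sub_mul, Matrix.one_mul, Hm_mul_Hm, sub_self]

lemma Hm_mul_Qm (x : Fin n → Fin p → ℝ) : Hm x * Qm x = 0 := by
  rw [Qm, Matrix.mul_sub, Matrix.mul_one, Hm_mul_Hm, sub_self]

lemma Qm_transpose (x : Fin n → Fin p → ℝ) : (Qm x)ᵀ = Qm x := by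
  rw [Qm, Matrix.transpose_sub, Matrix.transpose_one, Hm_transpose]

lemma blocks_orth (x : Fin n → Fin p → ℝ) :
    (Matrix.fromBlocks (Hm x) (Qm x) (Qm x) (Hm x))ᵀ
      * Matrix.fromBlocks (Hm x) (Qm x) (Qm x) (Hm x) = 1 := by
  rw [Matrix.fromBlocks_transpose, Hm_transpose, Qm_transpose, Matrix.fromBlocks_multiply]
  have h1 : Hm x * Hm x + Qm x * Qm x = 1 := by
    rw [Hm_mul_Hm, Qm_mul_Qm, Qm]; abel
  have h2 : Hm x * Qm x + Qm x * Hm x = 0 := by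
    rw [Qm_mul_Hm, Hm_mul_Qm, add_zero]
  have h2' : Qm x * Hm x + Hm x * Qm x = 0 := by rw [add_comm]; exact h2
  have h1' : Qm x * Qm x + Hm x * Hm x = 1 := by rw [add_comm]; exact h1
  rw [h1, h2, h2', h1']
  exact Matrix.fromBlocks_one

lemma measurable_Am : Measurable (Am (n := n) (p := p)) := by
  have hC : Continuous fun x : Fin n → Fin p → ℝ => (Matrix.of x)ᵀ * Matrix.of x :=
    ((continuous_id (X := Fin n → Fin p → ℝ)).matrix_transpose.matrix_mul continuous_id)
  have hinv : Measurable fun x : Fin n → Fin p → ℝ => ((Matrix.of x)ᵀ * Matrix.of x)⁻¹ := by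
    have hd : Measurable fun x : Fin n → Fin p → ℝ =>
        (((Matrix.of x)ᵀ * Matrix.of x).det)⁻¹ :=
      (hC.matrix_det.measurable).inv
    have ha : Measurable fun x : Fin n → Fin p → ℝ => ((Matrix.of x)ᵀ * Matrix.of x).adjugate :=
      hC.matrix_adjugate.measurable
    refine measurable_pi_lambda _ fun i => measurable_pi_lambda _ fun j => ?_
    have heq : (fun x : Fin n → Fin p → ℝ => ((Matrix.of x)ᵀ * Matrix.of x)⁻¹ i j)
        = fun x => (((Matrix.of x)ᵀ * Matrix.of x).det)⁻¹
            * ((Matrix.of x)ᵀ * Matrix.of x).adjugate i j := by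
      funext x
      rw [Matrix.inv_def, Ring.inverse_eq_inv]
      rfl
    rw [heq]
    exact hd.mul ((measurable_pi_apply j).comp ((measurable_pi_apply i).comp ha))
  refine measurable_pi_lambda _ fun i => measurable_pi_lambda _ fun j => ?_
  have heq : (fun x : Fin n → Fin p → ℝ => Am x i j)
      = fun x => ∑ k, ((Matrix.of x)ᵀ * Matrix.of x)⁻¹ i k * x j k := by
    funext x; rw [Am]; rfl
  rw [heq]
  exact Finset.measurable_sum _ fun k _ =>
    (((measurable_pi_apply k).comp ((measurable_pi_apply i).comp hinv)).mul
      ((measurable_pi_apply k).comp (measurable_pi_apply j)))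

lemma measurable_Hm : Measurable (Hm (n := n) (p := p)) := by
  refine measurable_pi_lambda _ fun i => measurable_pi_lambda _ fun j => ?_
  have heq : (fun x : Fin n → Fin p → ℝ => Hm x i j) = fun x => ∑ k, x i k * Am x k j := by
    funext x; rw [Hm]; rfl
  rw [heq]
  exact Finset.measurable_sum _ fun k _ =>
    (show Measurable fun x : Fin n → Fin p → ℝ => x i k from
      (measurable_pi_apply k).comp (measurable_pi_apply i)).mul
      ((measurable_pi_apply j).comp ((measurable_pi_apply k).comp measurable_Am))

lemma measurable_Qm : Measurable (Qm (n := n) (p := p)) := by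
  refine measurable_pi_lambda _ fun i => measurable_pi_lambda _ fun j => ?_
  have heq : (fun x : Fin n → Fin p → ℝ => Qm x i j)
      = fun x => (1 : Matrix (Fin n) (Fin n) ℝ) i j - Hm x i j := by
    funext x; rw [Qm]; rfl
  rw [heq]
  exact measurable_const.sub
    ((measurable_pi_apply j).comp ((measurable_pi_apply i).comp measurable_Hm))

/-- jointly measurable matrix-vector product with measurable matrix family -/
lemma measurable_matVec {α : Type*} [MeasurableSpace α] {a b : ℕ}
    {F : α → Matrix (Fin a) (Fin b) ℝ} (hF : Measurable F)
    {G : α → Fin b → ℝ} (hG : Measurable G) :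
    Measurable fun z => F z *ᵥ G z := by
  refine measurable_pi_lambda _ fun i => ?_
  have heq : (fun z => (F z *ᵥ G z) i) = fun z => ∑ k, F z i k * G z k := by
    funext z; rfl
  rw [heq]
  exact Finset.measurable_sum _ fun k _ =>
    ((measurable_pi_apply k).comp ((measurable_pi_apply i).comp hF)).mul
      ((measurable_pi_apply k).comp hG)

/-- jointly measurable dot product -/
lemma measurable_dotProd {α : Type*} [MeasurableSpace α] {b : ℕ}
    {F : α → Fin b → ℝ} (hF : Measurable F) {G : α → Fin b → ℝ} (hG : Measurable G) :
    Measurable fun z => F z ⬝ᵥ G z := by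
  have heq : (fun z => F z ⬝ᵥ G z) = fun z => ∑ k, F z k * G z k := by
    funext z; rfl
  rw [heq]
  exact Finset.measurable_sum _ fun k _ =>
    ((measurable_pi_apply k).comp hF).mul ((measurable_pi_apply k).comp hG)

/-- The "swap the residual noise" map preserves the two-fold iid Gaussian measure,
for every fixed design matrix `x`. -/
lemma swap_preserving (x : Fin n → Fin p → ℝ) (v : ℝ≥0) :
    Measure.map
      (fun q : (Fin n → ℝ) × (Fin n → ℝ) =>
        (Hm x *ᵥ q.1 + Qm x *ᵥ q.2, Qm x *ᵥ q.1 + Hm x *ᵥ q.2))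
      ((Measure.pi fun _ : Fin n => gaussianReal 0 v).prod
       (Measure.pi fun _ : Fin n => gaussianReal 0 v))
    = (Measure.pi fun _ : Fin n => gaussianReal 0 v).prod
       (Measure.pi fun _ : Fin n => gaussianReal 0 v) := by
  set ν := Measure.pi fun _ : Fin n => gaussianReal 0 v with hν
  set Mb := Matrix.fromBlocks (Hm x) (Qm x) (Qm x) (Hm x) with hMb
  have hmeasMb : Measurable fun e : Fin n ⊕ Fin n → ℝ => Mb *ᵥ e := by
    refine measurable_pi_lambda _ fun i => ?_
    have heq : (fun e : Fin n ⊕ Fin n → ℝ => (Mb *ᵥ e) i) = fun e => ∑ k, Mb i k * e k := by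
      funext e; rfl
    rw [heq]
    exact Finset.measurable_sum _ fun k _ => (measurable_pi_apply k).const_mul _
  have hrot : Measure.map (fun e => Mb *ᵥ e)
      (Measure.pi fun _ : Fin n ⊕ Fin n => gaussianReal 0 v)
      = Measure.pi fun _ : Fin n ⊕ Fin n => gaussianReal 0 v :=
    rot_invariant (blocks_orth x) v
  set e : ((i : Fin n ⊕ Fin n) → ℝ) ≃ᵐ ((Fin n → ℝ) × (Fin n → ℝ)) :=
    MeasurableEquiv.sumPiEquivProdPi (fun _ : Fin n ⊕ Fin n => ℝ) with he
  have hmp : MeasurePreserving e (Measure.pi fun _ : Fin n ⊕ Fin n => gaussianReal 0 v)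
      (ν.prod ν) :=
    measurePreserving_sumPiEquivProdPi (fun _ : Fin n ⊕ Fin n => gaussianReal 0 v)
  have hfun : (fun q : (Fin n → ℝ) × (Fin n → ℝ) =>
        (Hm x *ᵥ q.1 + Qm x *ᵥ q.2, Qm x *ᵥ q.1 + Hm x *ᵥ q.2))
      = e ∘ (fun w => Mb *ᵥ w) ∘ e.symm := by
    funext q
    have hsymm : (e.symm q : (Fin n ⊕ Fin n) → ℝ) = Sum.elim q.1 q.2 := by
      funext i; cases i <;> rfl
    have hmv : Mb *ᵥ (e.symm q) = Sum.elim (Hm x *ᵥ q.1 + Qm x *ᵥ q.2)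
        (Qm x *ᵥ q.1 + Hm x *ᵥ q.2) := by
      rw [hsymm, hMb, Matrix.fromBlocks_mulVec]
      rfl
    simp only [Function.comp_apply, hmv]
    apply Prod.ext
    · funext i; rfl
    · funext i; rfl
  rw [hfun]
  have hrotmp : MeasurePreserving (fun e : Fin n ⊕ Fin n → ℝ => Mb *ᵥ e)
      (Measure.pi fun _ : Fin n ⊕ Fin n => gaussianReal 0 v)
      (Measure.pi fun _ : Fin n ⊕ Fin n => gaussianReal 0 v) := ⟨hmeasMb, hrot⟩
  exact (hmp.comp (hrotmp.comp (hmp.symm e))).map_eq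

/-- pushing forward by a fiberwise measure-preserving map preserves a product measure -/
lemma map_prod_fiber {α β : Type*} [MeasurableSpace α] [MeasurableSpace β]
    (κ : Measure α) (m : Measure β) [SigmaFinite κ] [SigmaFinite m]
    {T : α → β → β} (hT : Measurable fun q : α × β => T q.1 q.2)
    (hpres : ∀ a, Measure.map (T a) m = m) :
    Measure.map (fun q : α × β => (q.1, T q.1 q.2)) (κ.prod m) = κ.prod m := by
  have hmeas : Measurable fun q : α × β => (q.1, T q.1 q.2) := measurable_fst.prodMk hT
  refine (Measure.prod_eq fun s t hs ht => ?_).symm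
  rw [Measure.map_apply hmeas (hs.prod ht)]
  have hpre : MeasurableSet ((fun q : α × β => (q.1, T q.1 q.2)) ⁻¹' s ×ˢ t) :=
    hmeas (hs.prod ht)
  rw [Measure.prod_apply hpre]
  have hsec : ∀ a : α, m (Prod.mk a ⁻¹' ((fun q : α × β => (q.1, T q.1 q.2)) ⁻¹' s ×ˢ t))
      = s.indicator (fun _ => m t) a := by
    intro a
    have hTa : Measurable (T a) := hT.comp measurable_prodMk_left
    by_cases ha : a ∈ s
    · have hset : Prod.mk a ⁻¹' ((fun q : α × β => (q.1, T q.1 q.2)) ⁻¹' s ×ˢ t)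
          = T a ⁻¹' t := by
        ext b; simp [ha]
      rw [hset, ← Measure.map_apply hTa ht, hpres a, Set.indicator_of_mem ha]
    · have hset : Prod.mk a ⁻¹' ((fun q : α × β => (q.1, T q.1 q.2)) ⁻¹' s ×ˢ t) = ∅ := by
        ext b; simp [ha]
      rw [hset, Set.indicator_of_notMem ha]
      simp
  rw [lintegral_congr hsec, lintegral_indicator hs]
  simp [mul_comm]

/-- rearrangement `((a,b),c) ↦ ((a,c),b)` of a triple product measure -/
lemma map_regroup {A B C : Type*} [MeasurableSpace A] [MeasurableSpace B] [MeasurableSpace C]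
    (α : Measure A) (β : Measure B) (γ : Measure C)
    [SigmaFinite α] [SigmaFinite β] [SigmaFinite γ] :
    Measure.map (fun q : (A × B) × C => ((q.1.1, q.2), q.1.2)) ((α.prod β).prod γ)
      = (α.prod γ).prod β := by
  have h1 : MeasurePreserving (MeasurableEquiv.prodAssoc : (A × B) × C ≃ᵐ A × B × C)
      ((α.prod β).prod γ) (α.prod (β.prod γ)) := measurePreserving_prodAssoc α β γ
  have h2 : MeasurePreserving (Prod.map (id : A → A) (Prod.swap : B × C → C × B))
      (α.prod (β.prod γ)) (α.prod (γ.prod β)) :=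
    (MeasurePreserving.id α).prod Measure.measurePreserving_swap
  have h3 : MeasurePreserving (MeasurableEquiv.prodAssoc.symm : A × C × B ≃ᵐ (A × C) × B)
      (α.prod (γ.prod β)) ((α.prod γ).prod β) :=
    (measurePreserving_prodAssoc α γ β).symm MeasurableEquiv.prodAssoc
  have hfun : (fun q : (A × B) × C => ((q.1.1, q.2), q.1.2))
      = (MeasurableEquiv.prodAssoc.symm : A × C × B → (A × C) × B)
        ∘ (Prod.map id Prod.swap) ∘ (MeasurableEquiv.prodAssoc : (A × B) × C → A × B × C) := by
    funext q; rfl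
  rw [hfun]
  exact (h3.comp (h2.comp h1)).map_eq

/-- dropping the last coordinate of an iid sequence -/
lemma map_castSucc_pi {k : ℕ} (m : Measure ℝ) [IsProbabilityMeasure m] :
    Measure.map (fun f : Fin (k + 1) → ℝ => fun i : Fin k => f i.castSucc)
      (Measure.pi fun _ : Fin (k + 1) => m) = Measure.pi fun _ : Fin k => m := by
  have hmp := measurePreserving_piFinSuccAbove (fun _ : Fin (k + 1) => m) (Fin.last k)
  have hfun : (fun f : Fin (k + 1) → ℝ => fun i : Fin k => f i.castSucc)
      = (fun q : ℝ × (Fin k → ℝ) => q.2)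
          ∘ (MeasurableEquiv.piFinSuccAbove (fun _ : Fin (k + 1) => ℝ) (Fin.last k)) := by
    funext f
    funext i
    show f i.castSucc = f ((Fin.last k).succAbove i)
    rw [Fin.succAbove_last]
  rw [hfun, ← Measure.map_map measurable_snd (MeasurableEquiv.measurable _), hmp.map_eq]
  rw [Measure.map_snd_prod]
  simp

end LinInvAux

end AuxForProof
section MainProof

open MeasureTheory ProbabilityTheory Filter Matrix
open scoped Matrix BigOperators ENNReal NNReal
open LinInvAux


/-- **Remark 1 (equality of joint distributions)**: in the homoskedastic Gaussian
linear model, let `Y'` be an independent copy of the response vector generated from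
the same features `X` (so `Y'_i = X_iᵀθ + ε'_i` with `ε'` an independent copy of the
training noise).  For a linearly invariant estimator `Êrr`, writing `Êrr_XY` for the
estimator computed on `(X, Y)` and `Êrr_XY'` for the estimator computed on `(X, Y')`,
the pairs `(Err_XY, Êrr_XY)` and `(Err_XY, Êrr_XY')` have the same joint
distribution. -/
theorem linInv_joint_law_swap
    {n p : ℕ} {Ω : Type} [mΩ : MeasurableSpace Ω] [StandardBorelSpace Ω] [Nonempty Ω]
    {μ : Measure Ω} [IsProbabilityMeasure μ]
    (M : GLM n p Ω μ) (E : LinInvEstimator n p)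
    (U : Ω → ℝ) (hUmeas : Measurable U)
    (hUlaw : Measure.map U μ = MeasureTheory.volume.restrict (Set.Icc (0 : ℝ) 1))
    (hUindep : IndepFun (fun ω => (M.Xtr ω, M.Ytr ω)) U μ)
    -- `ε'` is an independent copy of the training noise:
    (ε' : Ω → Fin n → ℝ) (hε'meas : Measurable ε')
    (hε'law : Measure.map ε' μ = Measure.pi fun _ : Fin n => gaussianReal 0 M.σ2)
    (hε'indep : IndepFun (fun ω => ((M.X ω, M.ε ω), U ω)) ε' μ) :
    Measure.map (fun ω => (M.errXY ω, E.rv M U ω)) μ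
      = Measure.map
          (fun ω => (M.errXY ω,
            E.F (M.Xtr ω) (fun i => M.Xtr ω i ⬝ᵥ M.θ + ε' ω i) (U ω))) μ := by
  classical
  -- basic measurability facts
  have hXtr : Measurable M.Xtr :=
    measurable_pi_lambda _ fun i => (measurable_pi_apply _).comp M.measX
  set εt : Ω → Fin n → ℝ := fun ω i => M.ε ω i.castSucc with hεtdef
  have hεt : Measurable εt :=
    measurable_pi_lambda _ fun i => (measurable_pi_apply _).comp M.measε
  have hYtr : Measurable M.Ytr := by
    refine measurable_pi_lambda _ fun i => ?_
    have heq : (fun ω => M.Ytr ω i) = fun ω => M.X ω i.castSucc ⬝ᵥ M.θ + M.ε ω i.castSucc := rfl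
    rw [heq]
    exact (measurable_dotProd ((measurable_pi_apply _).comp M.measX) measurable_const).add
      ((measurable_pi_apply _).comp M.measε)
  have hg : Measurable fun ω => (M.Xtr ω, M.Ytr ω) := hXtr.prodMk hYtr
  set ν : Measure (Fin n → ℝ) := Measure.pi fun _ : Fin n => gaussianReal 0 M.σ2 with hν
  -- the key distributional swap
  have key : ∀ G₂ : (Fin n → Fin p → ℝ) × (Fin p → ℝ) → ℝ, Measurable G₂ →
      Measure.map (fun ω => (G₂ (M.Xtr ω, ols (M.Xtr ω) (M.Ytr ω)), E.rv M U ω)) μ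
        = Measure.map (fun ω => (G₂ (M.Xtr ω, ols (M.Xtr ω) (M.Ytr ω)),
            E.F (M.Xtr ω) (fun i => M.Xtr ω i ⬝ᵥ M.θ + ε' ω i) (U ω))) μ := by
    intro G₂ hG₂
    haveI : IsProbabilityMeasure (Measure.map M.Xtr μ) :=
      Measure.isProbabilityMeasure_map hXtr.aemeasurable
    haveI : IsProbabilityMeasure (Measure.map U μ) :=
      Measure.isProbabilityMeasure_map hUmeas.aemeasurable
    set κW : Measure ((Fin n → Fin p → ℝ) × ℝ) :=
      (Measure.map M.Xtr μ).prod (Measure.map U μ) with hκW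
    set J : Ω → ((Fin n → Fin p → ℝ) × ℝ) × ((Fin n → ℝ) × (Fin n → ℝ)) :=
      fun ω => ((M.Xtr ω, U ω), (εt ω, ε' ω)) with hJ
    have hJmeas : Measurable J :=
      (hXtr.prodMk hUmeas).prodMk (hεt.prodMk hε'meas)
    -- the two push-forward maps
    set Φ₁ : ((Fin n → Fin p → ℝ) × ℝ) × ((Fin n → ℝ) × (Fin n → ℝ)) → ℝ × ℝ :=
      fun q => (G₂ (q.1.1, ols q.1.1 (Matrix.of q.1.1 *ᵥ M.θ + q.2.1)),
        E.F q.1.1 (Qm q.1.1 *ᵥ q.2.1) q.1.2) with hΦ₁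
    set Φ₂ : ((Fin n → Fin p → ℝ) × ℝ) × ((Fin n → ℝ) × (Fin n → ℝ)) → ℝ × ℝ :=
      fun q => (G₂ (q.1.1, ols q.1.1 (Matrix.of q.1.1 *ᵥ M.θ + q.2.1)),
        E.F q.1.1 (Qm q.1.1 *ᵥ q.2.2) q.1.2) with hΦ₂
    have hx11 : Measurable fun q : ((Fin n → Fin p → ℝ) × ℝ) × ((Fin n → ℝ) × (Fin n → ℝ)) =>
        q.1.1 := measurable_fst.comp measurable_fst
    have holspart : Measurable
        fun q : ((Fin n → Fin p → ℝ) × ℝ) × ((Fin n → ℝ) × (Fin n → ℝ)) =>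
          ols q.1.1 (Matrix.of q.1.1 *ᵥ M.θ + q.2.1) := by
      have heq : (fun q : ((Fin n → Fin p → ℝ) × ℝ) × ((Fin n → ℝ) × (Fin n → ℝ)) =>
          ols q.1.1 (Matrix.of q.1.1 *ᵥ M.θ + q.2.1))
          = fun q => Am q.1.1 *ᵥ (Matrix.of q.1.1 *ᵥ M.θ + q.2.1) :=
        funext fun q => ols_eq_Am _ _
      rw [heq]
      exact measurable_matVec (measurable_Am.comp hx11)
        ((measurable_matVec hx11 measurable_const).add (measurable_fst.comp measurable_snd))
    have hΦ₁meas : Measurable Φ₁ := by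
      refine (hG₂.comp (hx11.prodMk holspart)).prodMk ?_
      exact E.meas.comp ((hx11.prodMk (measurable_matVec (measurable_Qm.comp hx11)
        (measurable_fst.comp measurable_snd))).prodMk
        (measurable_snd.comp measurable_fst))
    have hΦ₂meas : Measurable Φ₂ := by
      refine (hG₂.comp (hx11.prodMk holspart)).prodMk ?_
      exact E.meas.comp ((hx11.prodMk (measurable_matVec (measurable_Qm.comp hx11)
        (measurable_snd.comp measurable_snd))).prodMk
        (measurable_snd.comp measurable_fst))
    -- identification of the two random pairs
    have hYdecomp : ∀ ω, M.Ytr ω = Matrix.of (M.Xtr ω) *ᵥ M.θ + εt ω := fun ω => rfl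
    have hresid : ∀ (x : Fin n → Fin p → ℝ) (e : Fin n → ℝ) (u : ℝ),
        E.F x e u = E.F x (Qm x *ᵥ e) u := by
      intro x e u
      have e2 : e = fun i => (Qm x *ᵥ e) i + x i ⬝ᵥ (Am x *ᵥ e) := by
        funext i
        have hH : x i ⬝ᵥ (Am x *ᵥ e) = (Hm x *ᵥ e) i := by
          rw [Hm, ← Matrix.mulVec_mulVec]; rfl
        rw [hH]
        have hQH : (Qm x *ᵥ e) i + (Hm x *ᵥ e) i = ((Qm x + Hm x) *ᵥ e) i := by
          rw [Matrix.add_mulVec]; rfl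
        rw [hQH, Qm, sub_add_cancel, Matrix.one_mulVec]
      have e3 := E.invariant x (Qm x *ᵥ e) u (Am x *ᵥ e)
      exact (congrArg (fun z => E.F x z u) e2).trans e3
    have hl₁ : (fun ω => (G₂ (M.Xtr ω, ols (M.Xtr ω) (M.Ytr ω)), E.rv M U ω)) = Φ₁ ∘ J := by
      funext ω
      apply Prod.ext
      · show G₂ (M.Xtr ω, ols (M.Xtr ω) (M.Ytr ω)) = _
        rw [hYdecomp ω]
        rfl
      · show E.rv M U ω = E.F (M.Xtr ω) (Qm (M.Xtr ω) *ᵥ εt ω) (U ω)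
        have e1 : E.rv M U ω = E.F (M.Xtr ω) (εt ω) (U ω) := by
          have h1 : M.Ytr ω = fun i => εt ω i + M.Xtr ω i ⬝ᵥ M.θ :=
            funext fun i => add_comm _ _
          show E.F (M.Xtr ω) (M.Ytr ω) (U ω) = _
          rw [h1, E.invariant]
        rw [e1]
        exact hresid _ _ _
    have hr₁ : (fun ω => (G₂ (M.Xtr ω, ols (M.Xtr ω) (M.Ytr ω)),
        E.F (M.Xtr ω) (fun i => M.Xtr ω i ⬝ᵥ M.θ + ε' ω i) (U ω))) = Φ₂ ∘ J := by
      funext ω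
      apply Prod.ext
      · show G₂ (M.Xtr ω, ols (M.Xtr ω) (M.Ytr ω)) = _
        rw [hYdecomp ω]
        rfl
      · show E.F (M.Xtr ω) (fun i => M.Xtr ω i ⬝ᵥ M.θ + ε' ω i) (U ω)
            = E.F (M.Xtr ω) (Qm (M.Xtr ω) *ᵥ ε' ω) (U ω)
        have h1 : (fun i => M.Xtr ω i ⬝ᵥ M.θ + ε' ω i)
            = fun i => ε' ω i + M.Xtr ω i ⬝ᵥ M.θ := funext fun i => add_comm _ _
        rw [h1, E.invariant]
        exact hresid _ _ _
    -- the law of J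
    have lawεt : Measure.map εt μ = ν := by
      have hcomp : εt = (fun f : Fin (n+1) → ℝ => fun i : Fin n => f i.castSucc) ∘ M.ε := rfl
      have hdrop : Measurable fun f : Fin (n+1) → ℝ => fun i : Fin n => f i.castSucc :=
        measurable_pi_lambda _ fun i => measurable_pi_apply _
      rw [hcomp, ← Measure.map_map hdrop M.measε, M.gauss, hν, map_castSucc_pi]
    have hi1 : IndepFun (fun ω => (M.Xtr ω, εt ω)) U μ := by
      have hφ : Measurable (fun z : (Fin n → Fin p → ℝ) × (Fin n → ℝ) =>
          (z.1, fun i => z.2 i - z.1 i ⬝ᵥ M.θ)) :=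
        measurable_fst.prodMk (measurable_pi_lambda _ fun i =>
          ((measurable_pi_apply i).comp measurable_snd).sub
            (measurable_dotProd ((measurable_pi_apply i).comp measurable_fst)
              measurable_const))
      have h := hUindep.comp hφ measurable_id
      have heq : (fun z : (Fin n → Fin p → ℝ) × (Fin n → ℝ) =>
            (z.1, fun i => z.2 i - z.1 i ⬝ᵥ M.θ)) ∘ (fun ω => (M.Xtr ω, M.Ytr ω))
          = fun ω => (M.Xtr ω, εt ω) := by
        funext ω
        refine Prod.ext rfl ?_
        funext i
        show M.Ytr ω i - M.Xtr ω i ⬝ᵥ M.θ = εt ω i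
        show (M.Xtr ω i ⬝ᵥ M.θ + εt ω i) - M.Xtr ω i ⬝ᵥ M.θ = εt ω i
        rw [add_sub_cancel_left]
      rw [heq] at h
      exact h
    have hi2 : IndepFun M.Xtr εt μ := by
      have hφ₁ : Measurable fun X : Fin (n+1) → Fin p → ℝ => fun i : Fin n => X i.castSucc :=
        measurable_pi_lambda _ fun i => measurable_pi_apply _
      have hφ₂ : Measurable fun f : Fin (n+1) → ℝ => fun i : Fin n => f i.castSucc :=
        measurable_pi_lambda _ fun i => measurable_pi_apply _
      exact M.indep.comp hφ₁ hφ₂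
    have hi3 : IndepFun M.Xtr U μ := hUindep.comp measurable_fst measurable_id
    have hi4 : IndepFun (fun ω => ((M.Xtr ω, U ω), εt ω)) ε' μ := by
      have hψ : Measurable fun z : ((Fin (n+1) → Fin p → ℝ) × (Fin (n+1) → ℝ)) × ℝ =>
          (((fun i : Fin n => z.1.1 i.castSucc), z.2), fun i : Fin n => z.1.2 i.castSucc) :=
        ((measurable_pi_lambda _ fun i =>
            (measurable_pi_apply _).comp (measurable_fst.comp measurable_fst)).prodMk
          measurable_snd).prodMk
          (measurable_pi_lambda _ fun i =>
            (measurable_pi_apply _).comp (measurable_snd.comp measurable_fst))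
      exact hε'indep.comp hψ measurable_id
    have lawXε : Measure.map (fun ω => (M.Xtr ω, εt ω)) μ = (Measure.map M.Xtr μ).prod ν := by
      rw [(indepFun_iff_map_prod_eq_prod_map_map hXtr.aemeasurable hεt.aemeasurable).mp hi2,
        lawεt]
    have law2 : Measure.map (fun ω => ((M.Xtr ω, εt ω), U ω)) μ
        = ((Measure.map M.Xtr μ).prod ν).prod (Measure.map U μ) := by
      rw [(indepFun_iff_map_prod_eq_prod_map_map (hXtr.prodMk hεt).aemeasurable
        hUmeas.aemeasurable).mp hi1, lawXε]
    have lawWε : Measure.map (fun ω => ((M.Xtr ω, U ω), εt ω)) μ = κW.prod ν := by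
      have hfun : (fun ω => ((M.Xtr ω, U ω), εt ω))
          = (fun q : ((Fin n → Fin p → ℝ) × (Fin n → ℝ)) × ℝ => ((q.1.1, q.2), q.1.2))
            ∘ (fun ω => ((M.Xtr ω, εt ω), U ω)) := rfl
      have hregmeas : Measurable
          fun q : ((Fin n → Fin p → ℝ) × (Fin n → ℝ)) × ℝ => ((q.1.1, q.2), q.1.2) :=
        ((measurable_fst.comp measurable_fst).prodMk measurable_snd).prodMk
          (measurable_snd.comp measurable_fst)
      rw [hfun, ← Measure.map_map hregmeas ((hXtr.prodMk hεt).prodMk hUmeas), law2,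
        map_regroup, hκW]
    have law3 : Measure.map (fun ω => (((M.Xtr ω, U ω), εt ω), ε' ω)) μ
        = (κW.prod ν).prod ν := by
      rw [(indepFun_iff_map_prod_eq_prod_map_map
        ((hXtr.prodMk hUmeas).prodMk hεt).aemeasurable hε'meas.aemeasurable).mp hi4,
        lawWε, hε'law, hν]
    have lawJ : Measure.map J μ = κW.prod (ν.prod ν) := by
      have hfun : J = (MeasurableEquiv.prodAssoc :
            ((((Fin n → Fin p → ℝ) × ℝ) × (Fin n → ℝ)) × (Fin n → ℝ))
              ≃ᵐ (((Fin n → Fin p → ℝ) × ℝ) × ((Fin n → ℝ) × (Fin n → ℝ))))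
          ∘ (fun ω => (((M.Xtr ω, U ω), εt ω), ε' ω)) := rfl
      rw [hfun, ← Measure.map_map (MeasurableEquiv.measurable _)
        (((hXtr.prodMk hUmeas).prodMk hεt).prodMk hε'meas), law3,
        Measure.prodAssoc_prod]
    -- the reflection map
    set R : ((Fin n → Fin p → ℝ) × ℝ) × ((Fin n → ℝ) × (Fin n → ℝ))
        → ((Fin n → Fin p → ℝ) × ℝ) × ((Fin n → ℝ) × (Fin n → ℝ)) :=
      fun q => (q.1, (Hm q.1.1 *ᵥ q.2.1 + Qm q.1.1 *ᵥ q.2.2,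
        Qm q.1.1 *ᵥ q.2.1 + Hm q.1.1 *ᵥ q.2.2)) with hR
    have hRmeas : Measurable R := by
      refine measurable_fst.prodMk (Measurable.prodMk ?_ ?_)
      · exact (measurable_matVec (measurable_Hm.comp hx11)
          (measurable_fst.comp measurable_snd)).add
          (measurable_matVec (measurable_Qm.comp hx11)
            (measurable_snd.comp measurable_snd))
      · exact (measurable_matVec (measurable_Qm.comp hx11)
          (measurable_fst.comp measurable_snd)).add
          (measurable_matVec (measurable_Hm.comp hx11)
            (measurable_snd.comp measurable_snd))
    have hΦeq : Φ₁ = Φ₂ ∘ R := by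
      funext q
      apply Prod.ext
      · show G₂ (q.1.1, ols q.1.1 (Matrix.of q.1.1 *ᵥ M.θ + q.2.1))
            = G₂ (q.1.1, ols q.1.1 (Matrix.of q.1.1 *ᵥ M.θ
              + (Hm q.1.1 *ᵥ q.2.1 + Qm q.1.1 *ᵥ q.2.2)))
        have holseq : ols q.1.1 (Matrix.of q.1.1 *ᵥ M.θ
              + (Hm q.1.1 *ᵥ q.2.1 + Qm q.1.1 *ᵥ q.2.2))
            = ols q.1.1 (Matrix.of q.1.1 *ᵥ M.θ + q.2.1) := by
          simp only [ols_eq_Am, Matrix.mulVec_add, Matrix.mulVec_mulVec,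
            Am_mul_Hm, Am_mul_Qm, Matrix.zero_mulVec, add_zero]
        rw [holseq]
      · show E.F q.1.1 (Qm q.1.1 *ᵥ q.2.1) q.1.2
            = E.F q.1.1 (Qm q.1.1 *ᵥ (Qm q.1.1 *ᵥ q.2.1 + Hm q.1.1 *ᵥ q.2.2)) q.1.2
        have hveq : Qm q.1.1 *ᵥ (Qm q.1.1 *ᵥ q.2.1 + Hm q.1.1 *ᵥ q.2.2)
            = Qm q.1.1 *ᵥ q.2.1 := by
          simp only [Matrix.mulVec_add, Matrix.mulVec_mulVec,
            Qm_mul_Qm, Qm_mul_Hm, Matrix.zero_mulVec, add_zero]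
        rw [hveq]
    have mapRΛ : Measure.map R (κW.prod (ν.prod ν)) = κW.prod (ν.prod ν) := by
      have hT : Measurable fun q : ((Fin n → Fin p → ℝ) × ℝ) × ((Fin n → ℝ) × (Fin n → ℝ)) =>
          ((Hm q.1.1 *ᵥ q.2.1 + Qm q.1.1 *ᵥ q.2.2,
            Qm q.1.1 *ᵥ q.2.1 + Hm q.1.1 *ᵥ q.2.2) : (Fin n → ℝ) × (Fin n → ℝ)) := by
        refine Measurable.prodMk ?_ ?_
        · exact (measurable_matVec (measurable_Hm.comp hx11)
            (measurable_fst.comp measurable_snd)).add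
            (measurable_matVec (measurable_Qm.comp hx11)
              (measurable_snd.comp measurable_snd))
        · exact (measurable_matVec (measurable_Qm.comp hx11)
            (measurable_fst.comp measurable_snd)).add
            (measurable_matVec (measurable_Hm.comp hx11)
              (measurable_snd.comp measurable_snd))
      exact map_prod_fiber κW (ν.prod ν) hT fun a => swap_preserving a.1 M.σ2
    calc Measure.map (fun ω => (G₂ (M.Xtr ω, ols (M.Xtr ω) (M.Ytr ω)), E.rv M U ω)) μ
        = Measure.map (Φ₁ ∘ J) μ := by rw [hl₁]
      _ = Measure.map Φ₁ (Measure.map J μ) := (Measure.map_map hΦ₁meas hJmeas).symm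
      _ = Measure.map Φ₁ (κW.prod (ν.prod ν)) := by rw [lawJ]
      _ = Measure.map (Φ₂ ∘ R) (κW.prod (ν.prod ν)) := by rw [← hΦeq]
      _ = Measure.map Φ₂ (Measure.map R (κW.prod (ν.prod ν))) :=
          (Measure.map_map hΦ₂meas hRmeas).symm
      _ = Measure.map Φ₂ (κW.prod (ν.prod ν)) := by rw [mapRΛ]
      _ = Measure.map Φ₂ (Measure.map J μ) := by rw [lawJ]
      _ = Measure.map (Φ₂ ∘ J) μ := Measure.map_map hΦ₂meas hJmeas
      _ = Measure.map (fun ω => (G₂ (M.Xtr ω, ols (M.Xtr ω) (M.Ytr ω)),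
            E.F (M.Xtr ω) (fun i => M.Xtr ω i ⬝ᵥ M.θ + ε' ω i) (U ω))) μ := by rw [← hr₁]
  -- a measurable representation of the conditional prediction error
  have hrep : ∃ G₂ : (Fin n → Fin p → ℝ) × (Fin p → ℝ) → ℝ, Measurable G₂ ∧
      M.errXY =ᵐ[μ] fun ω => G₂ (M.Xtr ω, ols (M.Xtr ω) (M.Ytr ω)) := by
    by_cases hInt : Integrable M.testLoss μ
    · -- conditional expectation computed through independence of the test point
      set T : Ω → (Fin p → ℝ) × ℝ := fun ω => (M.X ω (Fin.last n), M.ε ω (Fin.last n))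
        with hTdef
      have hT : Measurable T :=
        ((measurable_pi_apply _).comp M.measX).prodMk ((measurable_pi_apply _).comp M.measε)
      set η : Measure ((Fin p → ℝ) × ℝ) := Measure.map T μ with hη
      haveI : IsProbabilityMeasure η := Measure.isProbabilityMeasure_map hT.aemeasurable
      set L : ((Fin n → Fin p → ℝ) × (Fin n → ℝ)) × ((Fin p → ℝ) × ℝ) → ℝ :=
        fun zq => (zq.2.1 ⬝ᵥ M.θ + zq.2.2 - zq.2.1 ⬝ᵥ ols zq.1.1 zq.1.2) ^ 2 with hLdef
      have hL : Measurable L := by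
        have holsm : Measurable fun zq :
            ((Fin n → Fin p → ℝ) × (Fin n → ℝ)) × ((Fin p → ℝ) × ℝ) =>
            ols zq.1.1 zq.1.2 := by
          have heq : (fun zq : ((Fin n → Fin p → ℝ) × (Fin n → ℝ)) × ((Fin p → ℝ) × ℝ) =>
              ols zq.1.1 zq.1.2) = fun zq => Am zq.1.1 *ᵥ zq.1.2 :=
            funext fun zq => ols_eq_Am _ _
          rw [heq]
          exact measurable_matVec (measurable_Am.comp (measurable_fst.comp measurable_fst))
            (measurable_snd.comp measurable_fst)
        exact (((measurable_dotProd (measurable_fst.comp measurable_snd)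
          measurable_const).add (measurable_snd.comp measurable_snd)).sub
          (measurable_dotProd (measurable_fst.comp measurable_snd) holsm)).pow_const 2
      have hLtest : M.testLoss = fun ω => L ((M.Xtr ω, M.Ytr ω), T ω) := rfl
      have hG' : Measurable fun z : (Fin n → Fin p → ℝ) × (Fin n → ℝ) =>
          ∫ q, L (z, q) ∂η :=
        hL.stronglyMeasurable.integral_prod_right'.measurable
      -- independence of the training data and the test point
      have hfT : IndepFun (fun ω => (M.Xtr ω, M.Ytr ω)) T μ := by
        have hmemS : ∀ i : Fin n,
            i.castSucc ∈ (Finset.univ.image Fin.castSucc : Finset (Fin (n+1))) :=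
          fun i => Finset.mem_image_of_mem _ (Finset.mem_univ i)
        have hmemT : Fin.last n ∈ ({Fin.last n} : Finset (Fin (n+1))) := by simp
        have hdisj : Disjoint (Finset.univ.image Fin.castSucc : Finset (Fin (n+1)))
            ({Fin.last n} : Finset (Fin (n+1))) := by
          rw [Finset.disjoint_right]
          intro a ha
          simp only [Finset.mem_singleton] at ha
          subst ha
          simp only [Finset.mem_image, Finset.mem_univ, true_and, not_exists]
          intro i
          exact Fin.ne_of_lt (Fin.castSucc_lt_last i)
        have hDmeas : ∀ i : Fin (n+1), Measurable fun ω => (M.X ω i, M.ε ω i) := fun i =>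
          ((measurable_pi_apply i).comp M.measX).prodMk ((measurable_pi_apply i).comp M.measε)
        have hbig := M.iid.indepFun_finset (Finset.univ.image Fin.castSucc)
          ({Fin.last n} : Finset (Fin (n+1))) hdisj hDmeas
        have hφmeas : Measurable fun g :
            (i : (Finset.univ.image Fin.castSucc : Finset (Fin (n+1)))) → (Fin p → ℝ) × ℝ =>
            ((fun i : Fin n => (g ⟨i.castSucc, hmemS i⟩).1),
             (fun i : Fin n => (g ⟨i.castSucc, hmemS i⟩).1 ⬝ᵥ M.θ
               + (g ⟨i.castSucc, hmemS i⟩).2)) := by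
          refine Measurable.prodMk ?_ ?_
          · exact measurable_pi_lambda _ fun i =>
              measurable_fst.comp (measurable_pi_apply _)
          · exact measurable_pi_lambda _ fun i =>
              (measurable_dotProd (measurable_fst.comp (measurable_pi_apply _))
                measurable_const).add (measurable_snd.comp (measurable_pi_apply _))
        have hψmeas : Measurable fun g :
            (i : ({Fin.last n} : Finset (Fin (n+1)))) → (Fin p → ℝ) × ℝ =>
            g ⟨Fin.last n, hmemT⟩ := measurable_pi_apply _
        exact hbig.comp hφmeas hψmeas
      have hlawfT : Measure.map (fun ω => ((M.Xtr ω, M.Ytr ω), T ω)) μ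
          = (Measure.map (fun ω => (M.Xtr ω, M.Ytr ω)) μ).prod η :=
        (indepFun_iff_map_prod_eq_prod_map_map hg.aemeasurable hT.aemeasurable).mp hfT
      have hLint : Integrable L ((Measure.map (fun ω => (M.Xtr ω, M.Ytr ω)) μ).prod η) := by
        rw [← hlawfT]
        refine (integrable_map_measure hL.aestronglyMeasurable
          (hg.prodMk hT).aemeasurable).mpr ?_
        exact hInt
      have hG'int : Integrable (fun z => ∫ q, L (z, q) ∂η)
          (Measure.map (fun ω => (M.Xtr ω, M.Ytr ω)) μ) := hLint.integral_prod_left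
      have hgint : Integrable (fun ω => ∫ q, L ((M.Xtr ω, M.Ytr ω), q) ∂η) μ := by
        have := (integrable_map_measure hG'.aestronglyMeasurable hg.aemeasurable).mp hG'int
        exact this
      have hm : M.mXY ≤ mΩ := hg.comap_le
      haveI : IsFiniteMeasure (μ.trim hm) := ⟨by
        rw [trim_measurableSet_eq hm (@MeasurableSet.univ Ω M.mXY)]
        exact measure_lt_top μ _⟩
      have hae : (fun ω => ∫ q, L ((M.Xtr ω, M.Ytr ω), q) ∂η)
          =ᵐ[μ] μ[M.testLoss | M.mXY] := by
        refine ae_eq_condExp_of_forall_setIntegral_eq hm hInt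
          (fun s _ _ => hgint.integrableOn) ?_ ?_
        · rintro s ⟨t, ht, rfl⟩ -
          have hLrestrict : Integrable L
              (((Measure.map (fun ω => (M.Xtr ω, M.Ytr ω)) μ).restrict t).prod η) := by
            have heq : ((Measure.map (fun ω => (M.Xtr ω, M.Ytr ω)) μ).restrict t).prod η
                = ((Measure.map (fun ω => (M.Xtr ω, M.Ytr ω)) μ).prod η).restrict
                    (t ×ˢ Set.univ) := by
              conv_lhs => rw [← Measure.restrict_univ (μ := η)]
              rw [Measure.prod_restrict]
            rw [heq]
            exact hLint.integrableOn
          have hRHS : ∫ x in (fun ω => (M.Xtr ω, M.Ytr ω)) ⁻¹' t, M.testLoss x ∂μ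
              = ∫ z in t ×ˢ Set.univ, L z
                  ∂((Measure.map (fun ω => (M.Xtr ω, M.Ytr ω)) μ).prod η) := by
            have hpre : (fun ω => ((M.Xtr ω, M.Ytr ω), T ω)) ⁻¹' (t ×ˢ Set.univ)
                = (fun ω => (M.Xtr ω, M.Ytr ω)) ⁻¹' t := by
              ext ω; simp
            rw [← hlawfT, setIntegral_map (ht.prod MeasurableSet.univ)
              hL.aestronglyMeasurable (hg.prodMk hT).aemeasurable, hpre, hLtest]
          have hfub : ∫ z in t ×ˢ Set.univ, L z
                ∂((Measure.map (fun ω => (M.Xtr ω, M.Ytr ω)) μ).prod η)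
              = ∫ z in t, (∫ q, L (z, q) ∂η)
                ∂(Measure.map (fun ω => (M.Xtr ω, M.Ytr ω)) μ) := by
            have heqr : ((Measure.map (fun ω => (M.Xtr ω, M.Ytr ω)) μ).prod η).restrict
                  (t ×ˢ Set.univ)
                = ((Measure.map (fun ω => (M.Xtr ω, M.Ytr ω)) μ).restrict t).prod η := by
              rw [← Measure.prod_restrict, Measure.restrict_univ]
            show ∫ z, L z ∂(((Measure.map (fun ω => (M.Xtr ω, M.Ytr ω)) μ).prod η).restrict
              (t ×ˢ Set.univ)) = _
            rw [heqr]
            exact integral_prod L hLrestrict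
          calc ∫ x in (fun ω => (M.Xtr ω, M.Ytr ω)) ⁻¹' t,
                (∫ q, L ((M.Xtr x, M.Ytr x), q) ∂η) ∂μ
              = ∫ z in t, (∫ q, L (z, q) ∂η)
                  ∂(Measure.map (fun ω => (M.Xtr ω, M.Ytr ω)) μ) :=
                (setIntegral_map ht hG'.aestronglyMeasurable hg.aemeasurable).symm
            _ = ∫ z in t ×ˢ Set.univ, L z
                  ∂((Measure.map (fun ω => (M.Xtr ω, M.Ytr ω)) μ).prod η) := hfub.symm
            _ = ∫ x in (fun ω => (M.Xtr ω, M.Ytr ω)) ⁻¹' t, M.testLoss x ∂μ := hRHS.symm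
        · exact ((hG'.comp (comap_measurable _)).stronglyMeasurable
            ).aestronglyMeasurable
      exact ⟨fun w => ∫ q, (q.1 ⬝ᵥ M.θ + q.2 - q.1 ⬝ᵥ w.2) ^ 2 ∂η, by
        have hL₂ : Measurable fun wq :
            ((Fin n → Fin p → ℝ) × (Fin p → ℝ)) × ((Fin p → ℝ) × ℝ) =>
            (wq.2.1 ⬝ᵥ M.θ + wq.2.2 - wq.2.1 ⬝ᵥ wq.1.2) ^ 2 :=
          (((measurable_dotProd (measurable_fst.comp measurable_snd)
            measurable_const).add (measurable_snd.comp measurable_snd)).sub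
            (measurable_dotProd (measurable_fst.comp measurable_snd)
              (measurable_snd.comp measurable_fst))).pow_const 2
        exact hL₂.stronglyMeasurable.integral_prod_right'.measurable, hae.symm⟩
    · refine ⟨fun _ => 0, measurable_const, ?_⟩
      have h0 : M.errXY = 0 := condExp_of_not_integrable hInt
      rw [h0]
      rfl
  obtain ⟨G₂, hG₂meas, hae⟩ := hrep
  have h1 : (fun ω => (M.errXY ω, E.rv M U ω))
      =ᵐ[μ] fun ω => (G₂ (M.Xtr ω, ols (M.Xtr ω) (M.Ytr ω)), E.rv M U ω) :=
    hae.mono fun ω h => by exact congrArg (fun z => (z, E.rv M U ω)) h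
  have h2 : (fun ω => (M.errXY ω,
        E.F (M.Xtr ω) (fun i => M.Xtr ω i ⬝ᵥ M.θ + ε' ω i) (U ω)))
      =ᵐ[μ] fun ω => (G₂ (M.Xtr ω, ols (M.Xtr ω) (M.Ytr ω)),
        E.F (M.Xtr ω) (fun i => M.Xtr ω i ⬝ᵥ M.θ + ε' ω i) (U ω)) :=
    hae.mono fun ω h => by
      exact congrArg
        (fun z => (z, E.F (M.Xtr ω) (fun i => M.Xtr ω i ⬝ᵥ M.θ + ε' ω i) (U ω))) h
  rw [Measure.map_congr h1, Measure.map_congr h2]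
  exact key G₂ hG₂meas

end MainProof
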